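/- Let p > 2 and let W, ρ : ℝ → ℝ be bounded measurable functions with ρ(x) ≥ 0 for almost every x. Let λ ∈ ℝ and let u : ℝ → ℝ be continuously differentiable with locally Lipschitz derivative, with u and u′ square-integrable on ℝ, satisfying −u″(x) + W(x)·u(x) + λ·u(x) = ρ(x)·|u(x)|^{p−2}·u(x) for almost every x ∈ ℝ. If u has finite Morse index, then λ ≥ −L⁺ and λ ≥ −L⁻, where L⁺ (respectively L⁻) denotes the essential limsup of W(x) as x → +∞ (respectively x → −∞). -/

import Mathlib

open MeasureTheory Set Filter

/-- A test function: a Lipschitz function `ℝ → ℝ` with compact support. -/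
def IsTestFun (φ : ℝ → ℝ) : Prop :=
  (∃ K, LipschitzWith K φ) ∧ HasCompactSupport φ

/-- The quadratic form associated to the linearization of
`−u″ + W u + λ u = ρ |u|^{p−2} u` at the solution `u`. -/
noncomputable def quadForm (p lam : ℝ) (W ρ u φ : ℝ → ℝ) : ℝ :=
  ∫ x : ℝ, ((deriv φ x) ^ 2 + (W x + lam) * (φ x) ^ 2
    - (p - 1) * ρ x * |u x| ^ (p - 2) * (φ x) ^ 2)

/-- The Morse index of `u` is at least `m`: there are `m` linearly
independent test functions on whose span the quadratic form is negative. -/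
def MorseIndexGE (p lam : ℝ) (W ρ u : ℝ → ℝ) (m : ℕ) : Prop :=
  ∃ φ : Fin m → ℝ → ℝ, (∀ i, IsTestFun (φ i)) ∧ LinearIndependent ℝ φ ∧
    ∀ c : Fin m → ℝ, (∑ i, c i • φ i) ≠ 0 →
      quadForm p lam W ρ u (∑ i, c i • φ i) < 0

noncomputable def tentF (c r : ℝ) : ℝ → ℝ := fun x => max (1 - |x - c| / r) 0

variable {c r x : ℝ}

lemma tent_nonneg : 0 ≤ tentF c r x := le_max_right _ _

lemma tent_le_one (hr : 0 < r) : tentF c r x ≤ 1 := by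
  apply max_le _ zero_le_one
  have : 0 ≤ |x - c| / r := by positivity
  linarith

lemma tent_eq_zero (hr : 0 < r) (h : r ≤ |x - c|) : tentF c r x = 0 := by
  have : 1 - |x - c| / r ≤ 0 := by
    have : 1 ≤ |x - c| / r := (one_le_div hr).mpr h
    linarith
  exact max_eq_right this

lemma tent_center (hr : 0 < r) : tentF c r c = 1 := by
  simp [tentF]

lemma tent_support (hr : 0 < r) : tsupport (tentF c r) ⊆ Icc (c - r) (c + r) := by
  apply closure_minimal _ isClosed_Icc
  intro x hx
  rw [Function.mem_support] at hx
  by_contra hxI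
  rw [mem_Icc, not_and_or, not_le, not_le] at hxI
  refine hx (tent_eq_zero hr (le_abs.mpr ?_))
  rcases hxI with h | h
  · right; linarith
  · left; linarith

lemma tent_cont : Continuous (tentF c r) :=
  (continuous_const.sub ((continuous_id.sub continuous_const).abs.div_const r)).max continuous_const

lemma tent_hcs (hr : 0 < r) : HasCompactSupport (tentF c r) :=
  IsCompact.of_isClosed_subset isCompact_Icc (isClosed_tsupport _) (tent_support hr)

lemma tent_lip (hr : 0 < r) : LipschitzWith ⟨r⁻¹, by positivity⟩ (tentF c r) := by
  apply LipschitzWith.of_dist_le_mul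
  intro a b
  simp only [Real.dist_eq, NNReal.coe_mk]
  calc |tentF c r a - tentF c r b| ≤ |(1 - |a - c| / r) - (1 - |b - c| / r)| :=
        abs_max_sub_max_le_abs _ _ _
    _ = |(|b - c| - |a - c|)| / r := by
        have heq : (1 - |a - c| / r) - (1 - |b - c| / r) = (|b - c| - |a - c|) * r⁻¹ := by
          field_simp
          ring
        rw [heq, abs_mul, abs_of_pos (inv_pos.mpr hr), div_eq_mul_inv]
    _ ≤ |a - b| / r := by
        refine (div_le_div_iff_of_pos_right hr).mpr ?_
        have h := abs_abs_sub_abs_le_abs_sub (b - c) (a - c)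
        rw [show b - c - (a - c) = -(a - b) by ring, abs_neg] at h
        exact h
    _ = r⁻¹ * |a - b| := by field_simp

lemma tent_deriv_zero_of_not_mem (hr : 0 < r) (hx : x ∉ Icc (c - r) (c + r)) :
    deriv (tentF c r) x = 0 := by
  have hop : IsOpen (Icc (c - r) (c + r) : Set ℝ)ᶜ := isClosed_Icc.isOpen_compl
  have hev : tentF c r =ᶠ[nhds x] fun _ => 0 := by
    filter_upwards [hop.mem_nhds hx] with y hy
    have : y ∉ tsupport (tentF c r) := fun h => hy (tent_support hr h)
    exact image_eq_zero_of_notMem_tsupport this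
  rw [hev.deriv_eq]
  exact deriv_const _ _

lemma tent_deriv_left (hr : 0 < r) (h1 : c - r < x) (h2 : x < c) :
    deriv (tentF c r) x = 1 / r := by
  have hev : tentF c r =ᶠ[nhds x] fun y => (y - (c - r)) / r := by
    filter_upwards [isOpen_Ioo.mem_nhds (show x ∈ Ioo (c - r) c from ⟨h1, h2⟩)] with y hy
    obtain ⟨hy1, hy2⟩ := hy
    have habs : |y - c| = c - y := by rw [abs_of_neg (by linarith)]; ring
    have hpos : 0 ≤ 1 - |y - c| / r := by
      rw [habs, sub_nonneg, div_le_one hr]; linarith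
    rw [tentF]
    rw [max_eq_left hpos, habs]
    field_simp
    ring
  rw [hev.deriv_eq]
  exact (((hasDerivAt_id x).sub_const (c - r)).div_const r).deriv

lemma tent_deriv_right (hr : 0 < r) (h1 : c < x) (h2 : x < c + r) :
    deriv (tentF c r) x = -(1 / r) := by
  have hev : tentF c r =ᶠ[nhds x] fun y => ((c + r) - y) / r := by
    filter_upwards [isOpen_Ioo.mem_nhds (show x ∈ Ioo c (c + r) from ⟨h1, h2⟩)] with y hy
    obtain ⟨hy1, hy2⟩ := hy
    have habs : |y - c| = y - c := abs_of_pos (by linarith)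
    have hpos : 0 ≤ 1 - |y - c| / r := by
      rw [habs, sub_nonneg, div_le_one hr]; linarith
    rw [tentF]
    rw [max_eq_left hpos, habs]
    field_simp
    ring
  rw [hev.deriv_eq]
  have : HasDerivAt (fun y => ((c + r) - y) / r) ((-1) / r) x :=
    ((hasDerivAt_id x).const_sub (c + r)).div_const r
  rw [this.deriv]
  ring

lemma tent_deriv_sq_ae_bound (hr : 0 < r) :
    ∀ᵐ x ∂(volume : Measure ℝ), (deriv (tentF c r) x)^2 ≤
      Set.indicator (Icc (c - r) (c + r)) (fun _ => r⁻¹ ^ 2) x := by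
  have hnull : (volume : Measure ℝ) ({c - r, c, c + r} : Set ℝ) = 0 :=
    Set.Countable.measure_zero (Set.Finite.countable (Set.toFinite _)) _
  have h0 : ∀ᵐ x ∂(volume : Measure ℝ), x ∉ ({c - r, c, c + r} : Set ℝ) := by
    exact compl_mem_ae_iff.mpr hnull
  filter_upwards [h0] with x hx
  simp only [Set.mem_insert_iff, Set.mem_singleton_iff, not_or] at hx
  obtain ⟨hx1, hx2, hx3⟩ := hx
  by_cases hmem : x ∈ Icc (c - r) (c + r)
  · rw [Set.indicator_of_mem hmem]
    obtain ⟨ha, hb⟩ := hmem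
    rcases lt_or_gt_of_ne hx2 with h | h
    · rw [tent_deriv_left hr (lt_of_le_of_ne ha (Ne.symm hx1)) h]
      rw [one_div]
    · rw [tent_deriv_right hr h (lt_of_le_of_ne hb hx3)]
      norm_num
  · rw [Set.indicator_of_notMem hmem, tent_deriv_zero_of_not_mem hr hmem]
    norm_num

lemma tent_deriv_sq_integrable (hr : 0 < r) :
    Integrable (fun x => (deriv (tentF c r) x)^2) (volume : Measure ℝ) := by
  have hB : Integrable (Set.indicator (Icc (c - r) (c + r)) (fun _ => r⁻¹ ^ 2))
      (volume : Measure ℝ) := by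
    rw [integrable_indicator_iff measurableSet_Icc]
    exact integrableOn_const measure_Icc_lt_top.ne
  refine hB.mono' ?_ ?_
  · exact ((measurable_deriv _).pow_const 2).aestronglyMeasurable
  · filter_upwards [tent_deriv_sq_ae_bound hr] with x hx
    rwa [Real.norm_eq_abs, abs_of_nonneg (sq_nonneg _)]

lemma tent_deriv_sq_integral_le (hr : 0 < r) :
    ∫ x, (deriv (tentF c r) x)^2 ∂(volume : Measure ℝ) ≤ 2 / r := by
  have hB : Integrable (Set.indicator (Icc (c - r) (c + r)) (fun _ => r⁻¹ ^ 2))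
      (volume : Measure ℝ) := by
    rw [integrable_indicator_iff measurableSet_Icc]
    exact integrableOn_const measure_Icc_lt_top.ne
  have h1 := integral_mono_ae (tent_deriv_sq_integrable hr) hB (tent_deriv_sq_ae_bound hr)
  have h2 : ∫ x, Set.indicator (Icc (c - r) (c + r)) (fun _ => r⁻¹ ^ 2) x ∂(volume : Measure ℝ)
      = (2 * r) * r⁻¹ ^ 2 := by
    rw [integral_indicator_const _ measurableSet_Icc, Real.volume_real_Icc_of_le (by linarith), smul_eq_mul]
    ring_nf
  rw [h2] at h1
  refine h1.trans (le_of_eq ?_)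
  field_simp

lemma tent_sq_integrable (hr : 0 < r) :
    Integrable (fun x => (tentF c r x)^2) (volume : Measure ℝ) :=
  (tent_cont.pow 2).integrable_of_hasCompactSupport
    (((tent_hcs hr).comp_left (g := fun t : ℝ => t ^ 2) (by simp) : HasCompactSupport (fun x => (tentF c r x)^2)))

lemma tent_sq_integral_ge (hr : 0 < r) :
    r / 4 ≤ ∫ x, (tentF c r x)^2 ∂(volume : Measure ℝ) := by
  have hI : Integrable (Set.indicator (Icc (c - r/2) (c + r/2)) (fun _ => (1/2 : ℝ) ^ 2))
      (volume : Measure ℝ) := by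
    rw [integrable_indicator_iff measurableSet_Icc]
    exact integrableOn_const measure_Icc_lt_top.ne
  have hle : ∀ x, Set.indicator (Icc (c - r/2) (c + r/2)) (fun _ => (1/2 : ℝ) ^ 2) x
      ≤ (tentF c r x)^2 := by
    intro x
    by_cases hmem : x ∈ Icc (c - r/2) (c + r/2)
    · rw [Set.indicator_of_mem hmem]
      obtain ⟨ha, hb⟩ := hmem
      have habs : |x - c| ≤ r / 2 := abs_le.mpr ⟨by linarith, by linarith⟩
      have htent : (1/2 : ℝ) ≤ tentF c r x := by
        refine le_trans ?_ (le_max_left _ _)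
        rw [le_sub_comm, div_le_iff₀ hr]
        calc |x - c| ≤ r / 2 := habs
          _ = (1 - 1/2) * r := by ring
      exact pow_le_pow_left₀ (by norm_num) htent 2
    · rw [Set.indicator_of_notMem hmem]
      exact sq_nonneg _
  have h1 := integral_mono hI (tent_sq_integrable hr) hle
  have h2 : ∫ x, Set.indicator (Icc (c - r/2) (c + r/2)) (fun _ => (1/2 : ℝ) ^ 2) x
      ∂(volume : Measure ℝ) = r * (1/2)^2 := by
    rw [integral_indicator_const _ measurableSet_Icc, Real.volume_real_Icc_of_le (by linarith), smul_eq_mul]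
    ring_nf
  rw [h2] at h1
  refine le_trans (le_of_eq ?_) h1
  ring


noncomputable def igrand (p lam : ℝ) (W ρ u φ : ℝ → ℝ) (x : ℝ) : ℝ :=
  (deriv φ x) ^ 2 + (W x + lam) * (φ x) ^ 2
    - (p - 1) * ρ x * |u x| ^ (p - 2) * (φ x) ^ 2

variable {p lam δ : ℝ} {W ρ u : ℝ → ℝ}

lemma tent_igrand (hp : 2 < p) (hWmeas : Measurable W) (hρmeas : Measurable ρ)
    {C : ℝ} (hC : ∀ᵐ x ∂(volume : Measure ℝ), |W x| ≤ C ∧ |ρ x| ≤ C)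
    (hρ0 : ∀ᵐ x ∂(volume : Measure ℝ), 0 ≤ ρ x)
    (hu : Continuous u) (hr : 0 < r) :
    Integrable (igrand p lam W ρ u (tentF c r)) (volume : Measure ℝ) ∧
    ((∀ᵐ x ∂(volume : Measure ℝ), x ∈ Icc (c - r) (c + r) → W x + lam ≤ -δ) →
      0 < δ → 8 < δ * r ^ 2 →
      quadForm p lam W ρ u (tentF c r) < 0) := by
  set φ : ℝ → ℝ := tentF c r with hφ
  set f1 : ℝ → ℝ := fun x => (deriv φ x) ^ 2 with hf1def
  set f2 : ℝ → ℝ := fun x => (W x + lam) * (φ x) ^ 2 with hf2def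
  set f3 : ℝ → ℝ := fun x => (p - 1) * ρ x * |u x| ^ (p - 2) * (φ x) ^ 2 with hf3def
  have hφsq : Integrable (fun x => (φ x) ^ 2) (volume : Measure ℝ) := tent_sq_integrable hr
  have hf1 : Integrable f1 (volume : Measure ℝ) := tent_deriv_sq_integrable hr
  have hC0 : 0 ≤ C := by
    obtain ⟨x, hx, -⟩ := hC.exists
    exact le_trans (abs_nonneg _) hx
  have hf2 : Integrable f2 (volume : Measure ℝ) := by
    refine (hφsq.const_mul (C + |lam|)).mono' ?_ ?_
    · exact ((hWmeas.add_const lam).mul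
        ((tent_cont.pow 2).measurable)).aestronglyMeasurable
    · filter_upwards [hC] with x hx
      have he2 : f2 x = (W x + lam) * (φ x) ^ 2 := rfl
      rw [Real.norm_eq_abs, he2, abs_mul, abs_of_nonneg (sq_nonneg (φ x))]
      apply mul_le_mul_of_nonneg_right _ (sq_nonneg _)
      calc |W x + lam| ≤ |W x| + |lam| := abs_add_le _ _
        _ ≤ C + |lam| := by linarith [hx.1]
  -- bound on |u| on the support
  obtain ⟨M0, hM0⟩ := isCompact_Icc.exists_bound_of_continuousOn
    (s := Icc (c - r) (c + r)) hu.continuousOn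
  set M : ℝ := max M0 0 with hMdef
  have hM : ∀ x ∈ Icc (c - r) (c + r), |u x| ≤ M := fun x hx =>
    le_trans (hM0 x hx) (le_max_left _ _)
  have hMnn : 0 ≤ M := le_max_right _ _
  set K : ℝ := (p - 1) * C * M ^ (p - 2) with hKdef
  have hf3 : Integrable f3 (volume : Measure ℝ) := by
    refine (hφsq.const_mul K).mono' ?_ ?_
    · have hrpow : Continuous (fun x => |u x| ^ (p - 2)) :=
        (Real.continuous_rpow_const (by linarith)).comp hu.abs
      exact (((measurable_const.mul hρmeas).mul hrpow.measurable).mul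
        ((tent_cont.pow 2).measurable)).aestronglyMeasurable
    · filter_upwards [hC] with x hx
      by_cases hmem : x ∈ Icc (c - r) (c + r)
      · have he3 : f3 x = (p - 1) * ρ x * |u x| ^ (p - 2) * (φ x) ^ 2 := rfl
        rw [Real.norm_eq_abs, he3]
        have h1 : 0 ≤ |u x| ^ (p - 2) := Real.rpow_nonneg (abs_nonneg _) _
        rw [abs_mul, abs_mul, abs_mul, abs_of_nonneg (sq_nonneg (φ x)),
          abs_of_nonneg h1, abs_of_nonneg (by linarith : (0:ℝ) ≤ p - 1)]
        rw [hKdef]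
        have h2 : |u x| ^ (p - 2) ≤ M ^ (p - 2) :=
          Real.rpow_le_rpow (abs_nonneg _) (hM x hmem) (by linarith)
        have h3 : |ρ x| ≤ C := hx.2
        apply mul_le_mul_of_nonneg_right _ (sq_nonneg _)
        calc (p - 1) * |ρ x| * (|u x| ^ (p - 2))
            ≤ (p - 1) * C * (|u x| ^ (p - 2)) := by
              apply mul_le_mul_of_nonneg_right _ h1
              exact mul_le_mul_of_nonneg_left h3 (by linarith)
          _ ≤ (p - 1) * C * M ^ (p - 2) := by
              apply mul_le_mul_of_nonneg_left h2
              exact mul_nonneg (by linarith) hC0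
      · have hz : φ x = 0 :=
          image_eq_zero_of_notMem_tsupport (fun h => hmem (tent_support hr h))
        have he3 : f3 x = (p - 1) * ρ x * |u x| ^ (p - 2) * (φ x) ^ 2 := rfl
        rw [Real.norm_eq_abs, he3, hz]
        simp
  have hf12 : Integrable (fun x => f1 x + f2 x) (volume : Measure ℝ) := hf1.add hf2
  constructor
  · have : igrand p lam W ρ u φ = fun x => f1 x + f2 x - f3 x := rfl
    rw [this]
    exact hf12.sub hf3
  · intro hWc hδ hr8
    have hsplit : quadForm p lam W ρ u φ = (∫ x, f1 x) + (∫ x, f2 x) - ∫ x, f3 x := by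
      rw [quadForm, ← integral_add hf1 hf2, ← integral_sub hf12 hf3]
    have h3nn : 0 ≤ ∫ x, f3 x := by
      apply integral_nonneg_of_ae
      filter_upwards [hρ0] with x hx
      have : 0 ≤ |u x| ^ (p - 2) := Real.rpow_nonneg (abs_nonneg _) _
      apply mul_nonneg (mul_nonneg (mul_nonneg (by linarith) hx) this) (sq_nonneg _)
    have h1le : ∫ x, f1 x ≤ 2 / r := tent_deriv_sq_integral_le hr
    have h2le : ∫ x, f2 x ≤ -δ * ∫ x, (φ x) ^ 2 := by
      rw [← integral_const_mul]
      apply integral_mono_ae hf2 (hφsq.const_mul _)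
      filter_upwards [hWc] with x hx
      by_cases hmem : x ∈ Icc (c - r) (c + r)
      · exact mul_le_mul_of_nonneg_right (hx hmem) (sq_nonneg _)
      · have hz : φ x = 0 :=
          image_eq_zero_of_notMem_tsupport (fun h => hmem (tent_support hr h))
        simp [hf2def, hz]
    have hφ2ge : r / 4 ≤ ∫ x, (φ x) ^ 2 := tent_sq_integral_ge hr
    have h2le' : -δ * ∫ x, (φ x) ^ 2 ≤ -δ * (r / 4) := by
      apply mul_le_mul_of_nonpos_left hφ2ge (by linarith)
    have hneg : 2 / r + -δ * (r / 4) < 0 := by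
      have h2r : 2 / r < δ * (r / 4) := by
        rw [div_lt_iff₀ hr]
        nlinarith
      linarith
    rw [hsplit]
    linarith

lemma tent_zero_nhds (hr : 0 < r) {x : ℝ} (hx : x ∉ Icc (c - r) (c + r)) :
    tentF c r =ᶠ[nhds x] fun _ => (0 : ℝ) := by
  filter_upwards [isClosed_Icc.isOpen_compl.mem_nhds hx] with y hy
  exact image_eq_zero_of_notMem_tsupport (fun h => hy (tent_support hr h))

lemma key_lemma (p lam δ : ℝ) (W ρ u : ℝ → ℝ) (hp : 2 < p) (hWmeas : Measurable W)
    (hρmeas : Measurable ρ) {C : ℝ}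
    (hC : ∀ᵐ x ∂(volume : Measure ℝ), |W x| ≤ C ∧ |ρ x| ≤ C)
    (hρ0 : ∀ᵐ x ∂(volume : Measure ℝ), 0 ≤ ρ x) (hu : Continuous u)
    (hδ : 0 < δ) {r : ℝ} (hr : 0 < r) (hr8 : 8 < δ * r ^ 2)
    (cs : ℕ → ℝ) (hsep : ∀ i j : ℕ, i ≠ j → 2 * r < |cs i - cs j|)
    (hWc : ∀ i : ℕ, ∀ᵐ x ∂(volume : Measure ℝ),
      x ∈ Icc (cs i - r) (cs i + r) → W x + lam ≤ -δ)
    (m : ℕ) : MorseIndexGE p lam W ρ u m := by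
  classical
  set φ : Fin m → ℝ → ℝ := fun i => tentF (cs i) r with hφdef
  have hS : ∀ (x : ℝ) (i j : Fin m), i ≠ j → x ∈ Icc (cs (i : ℕ) - r) (cs (i : ℕ) + r) →
      x ∉ Icc (cs (j : ℕ) - r) (cs (j : ℕ) + r) := by
    intro x i j hij hxi hxj
    have hij' : (i : ℕ) ≠ (j : ℕ) := fun hv => hij (Fin.val_injective hv)
    have h := hsep i j hij'
    have h1 : |x - cs (i : ℕ)| ≤ r := abs_le.mpr ⟨by linarith [hxi.1], by linarith [hxi.2]⟩
    have h2 : |x - cs (j : ℕ)| ≤ r := abs_le.mpr ⟨by linarith [hxj.1], by linarith [hxj.2]⟩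
    have : |cs (i : ℕ) - cs (j : ℕ)| ≤ 2 * r := by
      calc |cs (i : ℕ) - cs (j : ℕ)| = |(cs (i : ℕ) - x) + (x - cs (j : ℕ))| := by ring_nf
        _ ≤ |cs (i : ℕ) - x| + |x - cs (j : ℕ)| := abs_add_le _ _
        _ ≤ r + r := by rw [abs_sub_comm]; exact add_le_add h1 h2
        _ = 2 * r := by ring
    linarith
  -- pointwise decomposition of the integrand of a linear combination
  have hpt : ∀ (a : Fin m → ℝ) (x : ℝ),
      igrand p lam W ρ u (∑ i, a i • φ i) x
        = ∑ i, (a i) ^ 2 * igrand p lam W ρ u (φ i) x := by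
    intro a x
    by_cases hex : ∃ i₀ : Fin m, x ∈ Icc (cs (i₀ : ℕ) - r) (cs (i₀ : ℕ) + r)
    · obtain ⟨i₀, hxi₀⟩ := hex
      have hzero : ∀ j : Fin m, j ≠ i₀ → φ j =ᶠ[nhds x] fun _ => (0 : ℝ) := by
        intro j hj
        exact tent_zero_nhds hr (hS x i₀ j (Ne.symm hj) hxi₀)
      have hev : (∑ i, a i • φ i) =ᶠ[nhds x] fun y => a i₀ * φ i₀ y := by
        have hall : ∀ᶠ y in nhds x, ∀ j : Fin m, j ≠ i₀ → φ j y = 0 := by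
          rw [eventually_all]
          intro j
          by_cases hj : j = i₀
          · exact Filter.Eventually.of_forall (fun y hy => absurd hj hy)
          · filter_upwards [hzero j hj] with y hy _
            exact hy
        filter_upwards [hall] with y hy
        rw [Finset.sum_apply]
        rw [Finset.sum_eq_single i₀]
        · rfl
        · intro j _ hj
          simp [hy j hj]
        · intro h
          exact absurd (Finset.mem_univ i₀) h
      have hψx : (∑ i, a i • φ i) x = a i₀ * φ i₀ x := hev.eq_of_nhds
      have hdψ : deriv (∑ i, a i • φ i) x = a i₀ * deriv (φ i₀) x := by
        rw [hev.deriv_eq, deriv_const_mul_field]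
      have hLHS : igrand p lam W ρ u (∑ i, a i • φ i) x
          = (a i₀) ^ 2 * igrand p lam W ρ u (φ i₀) x := by
        simp only [igrand]
        rw [hψx, hdψ]
        ring
      rw [hLHS, Finset.sum_eq_single i₀]
      · intro j _ hj
        have hxj : x ∉ Icc (cs (j : ℕ) - r) (cs (j : ℕ) + r) := hS x i₀ j (Ne.symm hj) hxi₀
        have h1 : φ j x = 0 :=
          image_eq_zero_of_notMem_tsupport (fun h => hxj (tent_support hr h))
        have h2 : deriv (φ j) x = 0 := tent_deriv_zero_of_not_mem hr hxj
        simp only [igrand, h1, h2]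
        ring
      · intro h
        exact absurd (Finset.mem_univ i₀) h
    · push_neg at hex
      have hzero : ∀ j : Fin m, φ j =ᶠ[nhds x] fun _ => (0 : ℝ) :=
        fun j => tent_zero_nhds hr (hex j)
      have hev : (∑ i, a i • φ i) =ᶠ[nhds x] fun _ => (0 : ℝ) := by
        have hall : ∀ᶠ y in nhds x, ∀ j : Fin m, φ j y = 0 := by
          rw [eventually_all]
          intro j
          exact hzero j
        filter_upwards [hall] with y hy
        rw [Finset.sum_apply]
        apply Finset.sum_eq_zero
        intro j _
        simp [hy j]
      have hψx : (∑ i, a i • φ i) x = 0 := hev.eq_of_nhds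
      have hdψ : deriv (∑ i, a i • φ i) x = 0 := by
        rw [hev.deriv_eq]
        exact deriv_const _ _
      have hLHS : igrand p lam W ρ u (∑ i, a i • φ i) x = 0 := by
        simp only [igrand]
        rw [hψx, hdψ]
        ring
      rw [hLHS]
      symm
      apply Finset.sum_eq_zero
      intro j _
      have h1 : φ j x = 0 :=
        image_eq_zero_of_notMem_tsupport (fun h => (hex j) (tent_support hr h))
      have h2 : deriv (φ j) x = 0 := tent_deriv_zero_of_not_mem hr (hex j)
      simp only [igrand, h1, h2]
      ring
  have hint : ∀ i : Fin m, Integrable (igrand p lam W ρ u (φ i)) (volume : Measure ℝ) :=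
    fun i => (tent_igrand (δ := δ) hp hWmeas hρmeas hC hρ0 hu hr).1
  have hQneg : ∀ i : Fin m, quadForm p lam W ρ u (φ i) < 0 :=
    fun i => (tent_igrand hp hWmeas hρmeas hC hρ0 hu hr).2 (hWc i) hδ hr8
  have hcomb : ∀ a : Fin m → ℝ, quadForm p lam W ρ u (∑ i, a i • φ i)
      = ∑ i, (a i) ^ 2 * quadForm p lam W ρ u (φ i) := by
    intro a
    have h1 : quadForm p lam W ρ u (∑ i, a i • φ i)
        = ∫ x, ∑ i, (a i) ^ 2 * igrand p lam W ρ u (φ i) x ∂(volume : Measure ℝ) := by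
      rw [quadForm]
      exact integral_congr_ae (Filter.Eventually.of_forall (fun x => hpt a x))
    rw [h1, integral_finset_sum]
    · apply Finset.sum_congr rfl
      intro i _
      rw [integral_const_mul]
      rfl
    · intro i _
      exact (hint i).const_mul _
  refine ⟨φ, ?_, ?_, ?_⟩
  · intro i
    exact ⟨⟨_, tent_lip hr⟩, tent_hcs hr⟩
  · rw [Fintype.linearIndependent_iff]
    intro g hg i
    have hgi := congrFun hg (cs (i : ℕ))
    simp only [Finset.sum_apply, Pi.smul_apply, smul_eq_mul, Pi.zero_apply] at hgi
    rw [Finset.sum_eq_single i] at hgi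
    · simp only [hφdef, tent_center hr, mul_one] at hgi
      exact hgi
    · intro j _ hj
      have hj' : (j : ℕ) ≠ (i : ℕ) := fun hv => hj (Fin.val_injective hv)
      have : r ≤ |cs (i : ℕ) - cs (j : ℕ)| := by
        have := hsep j i hj'
        rw [abs_sub_comm]
        linarith
      simp only [hφdef, tent_eq_zero hr this, mul_zero]
    · intro h
      exact absurd (Finset.mem_univ i) h
  · intro a hne
    have hex : ∃ i₀ : Fin m, a i₀ ≠ 0 := by
      by_contra h
      push_neg at h
      apply hne
      ext x
      rw [Finset.sum_apply]
      apply Finset.sum_eq_zero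
      intro j _
      simp [h j]
    obtain ⟨i₀, hi₀⟩ := hex
    rw [hcomb a]
    have : ∑ i, (a i) ^ 2 * quadForm p lam W ρ u (φ i) < ∑ _i : Fin m, (0 : ℝ) := by
      apply Finset.sum_lt_sum
      · intro i _
        exact mul_nonpos_of_nonneg_of_nonpos (sq_nonneg _) (hQneg i).le
      · exact ⟨i₀, Finset.mem_univ _,
          mul_neg_of_pos_of_neg (sq_pos_of_ne_zero hi₀) (hQneg i₀)⟩
    simpa using this

lemma nat_cast_abs_ge_one {i j : ℕ} (hij : i ≠ j) : (1 : ℝ) ≤ |(i : ℝ) - j| := by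
  have h : ((i : ℤ) - j) ≠ 0 := sub_ne_zero.mpr (by exact_mod_cast hij)
  have h2 : (1 : ℤ) ≤ |(i : ℤ) - j| := Int.one_le_abs h
  calc (1 : ℝ) = ((1 : ℤ) : ℝ) := by norm_num
    _ ≤ ((|(i : ℤ) - j| : ℤ) : ℝ) := by exact_mod_cast h2
    _ = |(i : ℝ) - j| := by rw [Int.cast_abs]; push_cast; ring_nf


/-- Lower bound on `λ` for finite Morse index `H¹` solutions of
`−u″ + W u + λ u = ρ |u|^{p−2} u` on the real line: `λ ≥ −L⁺` and
`λ ≥ −L⁻`, where `L^±` is the essential limsup of `W` at `±∞`. -/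
theorem stmt_18 (p lam : ℝ) (hp : 2 < p) (W ρ : ℝ → ℝ)
    (hWmeas : Measurable W) (hρmeas : Measurable ρ)
    (hbdd : ∃ C : ℝ, ∀ᵐ x ∂(volume : Measure ℝ), |W x| ≤ C ∧ |ρ x| ≤ C)
    (hρ : ∀ᵐ x ∂(volume : Measure ℝ), 0 ≤ ρ x)
    (u u' u'' : ℝ → ℝ)
    (hu : ∀ x, HasDerivAt u (u' x) x)
    (hu'cont : Continuous u') (hu'lip : LocallyLipschitz u')
    (hu'' : ∀ᵐ x ∂(volume : Measure ℝ), HasDerivAt u' (u'' x) x)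
    (huL2 : Integrable (fun x : ℝ => (u x) ^ 2))
    (hu'L2 : Integrable (fun x : ℝ => (u' x) ^ 2))
    (heq : ∀ᵐ x ∂(volume : Measure ℝ),
      -u'' x + W x * u x + lam * u x = ρ x * (|u x| ^ (p - 2) * u x))
    (hfin : ∃ m : ℕ, ¬ MorseIndexGE p lam W ρ u (m + 1)) :
    -(Filter.limsup W (Filter.atTop ⊓ MeasureTheory.ae volume)) ≤ lam ∧
    -(Filter.limsup W (Filter.atBot ⊓ MeasureTheory.ae volume)) ≤ lam := by
  obtain ⟨C, hC⟩ := hbdd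
  obtain ⟨m, hm⟩ := hfin
  have hdiff : Differentiable ℝ u := fun x => (hu x).differentiableAt
  have hucont : Continuous u := hdiff.continuous
  have hCae : ∀ᵐ x ∂(volume : Measure ℝ), W x ≤ C := by
    filter_upwards [hC] with x hx
    linarith [(abs_le.mp hx.1).2]
  constructor
  · by_contra hcon
    push_neg at hcon
    set F := Filter.atTop ⊓ MeasureTheory.ae (volume : Measure ℝ) with hF
    set L := Filter.limsup W F with hLdef
    have hbound : Filter.IsBoundedUnder (· ≤ ·) F W := by
      refine ⟨C, ?_⟩
      rw [Filter.eventually_map]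
      exact (hCae.filter_mono (inf_le_right : F ≤ MeasureTheory.ae volume))
    have hL : L < -lam := by
      have : lam < -L := hcon
      linarith
    set δ := (-lam - L) / 2 with hδdef
    have hδ : 0 < δ := by rw [hδdef]; linarith
    have hb : L < -lam - δ := by rw [hδdef]; linarith
    have hev2 : ∀ᶠ x in F, W x < -lam - δ := eventually_lt_of_limsup_lt hb hbound
    rw [hF, Filter.eventually_inf] at hev2
    obtain ⟨s, hs, t, ht, hst⟩ := hev2
    obtain ⟨R, hR⟩ := mem_atTop_sets.mp hs
    have haet : ∀ᵐ x ∂(volume : Measure ℝ), x ∈ t := ht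
    have hWR : ∀ᵐ x ∂(volume : Measure ℝ), R ≤ x → W x + lam ≤ -δ := by
      filter_upwards [haet] with x hxt hRx
      have hx : W x < -lam - δ := hst x ⟨hR x hRx, hxt⟩
      linarith
    apply hm
    set r := Real.sqrt (16 / δ) with hrdef
    have hr : 0 < r := Real.sqrt_pos.mpr (by positivity)
    have hr2 : r ^ 2 = 16 / δ := Real.sq_sqrt (by positivity)
    have hr8 : 8 < δ * r ^ 2 := by
      rw [hr2]
      rw [show δ * (16 / δ) = 16 by field_simp]
      norm_num
    set cs : ℕ → ℝ := fun i => R + (1 + r + 3 * r * i) with hcs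
    refine key_lemma p lam δ W ρ u hp hWmeas hρmeas hC hρ hucont hδ hr hr8 cs ?_ ?_ (m + 1)
    · intro i j hij
      have hone : (1 : ℝ) ≤ |(i : ℝ) - j| := nat_cast_abs_ge_one hij
      have habs : |cs i - cs j| = 3 * r * |(i : ℝ) - j| := by
        rw [show cs i - cs j = 3 * r * ((i : ℝ) - j) by rw [hcs]; push_cast; ring,
          abs_mul, abs_of_pos (by positivity : (0 : ℝ) < 3 * r)]
      rw [habs]
      nlinarith
    · intro i
      filter_upwards [hWR] with x hx hmem
      apply hx
      have h1 := hmem.1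
      have h2 : cs i - r = R + 1 + 3 * r * i := by rw [hcs]; push_cast; ring
      have hge : (0 : ℝ) ≤ 3 * r * i := by positivity
      rw [h2] at h1
      linarith
  · by_contra hcon
    push_neg at hcon
    set F := Filter.atBot ⊓ MeasureTheory.ae (volume : Measure ℝ) with hF
    set L := Filter.limsup W F with hLdef
    have hbound : Filter.IsBoundedUnder (· ≤ ·) F W := by
      refine ⟨C, ?_⟩
      rw [Filter.eventually_map]
      exact (hCae.filter_mono (inf_le_right : F ≤ MeasureTheory.ae volume))
    have hL : L < -lam := by
      have : lam < -L := hcon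
      linarith
    set δ := (-lam - L) / 2 with hδdef
    have hδ : 0 < δ := by rw [hδdef]; linarith
    have hb : L < -lam - δ := by rw [hδdef]; linarith
    have hev2 : ∀ᶠ x in F, W x < -lam - δ := eventually_lt_of_limsup_lt hb hbound
    rw [hF, Filter.eventually_inf] at hev2
    obtain ⟨s, hs, t, ht, hst⟩ := hev2
    obtain ⟨R, hR⟩ := mem_atBot_sets.mp hs
    have haet : ∀ᵐ x ∂(volume : Measure ℝ), x ∈ t := ht
    have hWR : ∀ᵐ x ∂(volume : Measure ℝ), x ≤ R → W x + lam ≤ -δ := by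
      filter_upwards [haet] with x hxt hRx
      have hx : W x < -lam - δ := hst x ⟨hR x hRx, hxt⟩
      linarith
    apply hm
    set r := Real.sqrt (16 / δ) with hrdef
    have hr : 0 < r := Real.sqrt_pos.mpr (by positivity)
    have hr2 : r ^ 2 = 16 / δ := Real.sq_sqrt (by positivity)
    have hr8 : 8 < δ * r ^ 2 := by
      rw [hr2]
      rw [show δ * (16 / δ) = 16 by field_simp]
      norm_num
    set cs : ℕ → ℝ := fun i => R - (1 + r + 3 * r * i) with hcs
    refine key_lemma p lam δ W ρ u hp hWmeas hρmeas hC hρ hucont hδ hr hr8 cs ?_ ?_ (m + 1)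
    · intro i j hij
      have hone : (1 : ℝ) ≤ |(i : ℝ) - j| := nat_cast_abs_ge_one hij
      have habs : |cs i - cs j| = 3 * r * |(i : ℝ) - j| := by
        rw [show cs i - cs j = 3 * r * ((j : ℝ) - i) by rw [hcs]; push_cast; ring,
          abs_mul, abs_of_pos (by positivity : (0 : ℝ) < 3 * r), abs_sub_comm]
      rw [habs]
      nlinarith
    · intro i
      filter_upwards [hWR] with x hx hmem
      apply hx
      have h1 := hmem.2
      have h2 : cs i + r = R - 1 - 3 * r * i := by rw [hcs]; push_cast; ring
      have hge : (0 : ℝ) ≤ 3 * r * i := by positivity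
      rw [h2] at h1
      linarith
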